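/- Let ℓ(t) = e·t + c^d be the linear path with e = (e_0,…,e_{d+1}) satisfying e_i > 0 for all 0 ≤ i ≤ d+1, Σ_{i=0}^{d+1} e_i = 1 and Σ_{i=0}^{d+1} i e_i ≤ 1. Then I_d(ℓ) < ∞. -/

import Mathlib

open MeasureTheory Real Set Filter Topology
open scoped ENNReal

noncomputable section

attribute [local instance] Classical.propDecidable

/-! ## Basic setting -/

abbrev I01 : Set ℝ := Set.Icc (0:ℝ) 1

def pt0 : I01 := ⟨0, Set.left_mem_Icc.mpr zero_le_one⟩

/-- Piecewise continuity on `[0,1]`: continuity off finitely many points. -/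
def PiecewiseContinuousOn01 (f : ℝ → ℝ) : Prop :=
  ∃ D : Finset ℝ, ∀ t ∈ Set.Icc (0:ℝ) 1, t ∉ D → ContinuousWithinAt f (Set.Icc (0:ℝ) 1) t

/-- Piecewise continuity on `[0,∞)`. -/
def PiecewiseContinuousOnIci (f : ℝ → ℝ) : Prop :=
  ∃ D : Set ℝ, (∀ T > (0:ℝ), (D ∩ Set.Icc 0 T).Finite) ∧
    ∀ t ∈ Set.Ici (0:ℝ), t ∉ D → ContinuousWithinAt f (Set.Ici (0:ℝ)) t

/-- Assumption (ND) on the time-dependent parameters `p, β`. -/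
structure ND (p β : ℝ → ℝ) (p0 β0 β1 : ℝ) : Prop where
  p_nonneg : ∀ t ∈ Set.Icc (0:ℝ) 1, 0 ≤ p t
  p_le : ∀ t ∈ Set.Icc (0:ℝ) 1, p t ≤ p0
  p0_lt_one : p0 < 1
  β_lb : ∀ t ∈ Set.Icc (0:ℝ) 1, β0 ≤ β t
  β_ub : ∀ t ∈ Set.Icc (0:ℝ) 1, β t ≤ β1
  β0_pos : 0 < β0
  p_pc : PiecewiseContinuousOn01 p
  β_pc : PiecewiseContinuousOn01 β

/-- Assumption (ND), extended to `[0,∞)`. -/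
structure NDIci (p β : ℝ → ℝ) (p0 β0 β1 : ℝ) : Prop where
  p_nonneg : ∀ t ∈ Set.Ici (0:ℝ), 0 ≤ p t
  p_le : ∀ t ∈ Set.Ici (0:ℝ), p t ≤ p0
  p0_lt_one : p0 < 1
  β_lb : ∀ t ∈ Set.Ici (0:ℝ), β0 ≤ β t
  β_ub : ∀ t ∈ Set.Ici (0:ℝ), β t ≤ β1
  β0_pos : 0 < β0
  p_pc : PiecewiseContinuousOnIci p
  β_pc : PiecewiseContinuousOnIci β

/-- The limiting initial data `(c_i)`, `c = Σ_i c_i`, `c̃ = Σ_i i c_i` of assumption (LIM). -/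
structure LIMc (c : ℕ → ℝ) (cc ctil : ℝ) : Prop where
  nonneg : ∀ i, 0 ≤ c i
  summable : Summable c
  cc_eq : cc = ∑' i, c i
  mul_summable : Summable (fun i : ℕ => (i : ℝ) * c i)
  ctil_eq : ctil = ∑' i : ℕ, (i : ℝ) * c i

/-- Assumption (LIM) for the array of initial urn configurations `init n i = Z_i^n(0)`. -/
structure LIM (init : ℕ → ℕ → ℕ) (c : ℕ → ℝ) (cc ctil : ℝ) : Prop where
  c_lim : ∀ i, Tendsto (fun n : ℕ => (init n i : ℝ) / n) atTop (𝓝 (c i))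
  ctil_lim : Tendsto (fun n : ℕ => ∑' i : ℕ, (i : ℝ) * (init n i : ℝ) / n) atTop (𝓝 ctil)
  ctil_eq : ctil = ∑' i : ℕ, (i : ℝ) * c i
  mul_summable : Summable (fun i : ℕ => (i : ℝ) * c i)
  c_summable : Summable c
  cc_eq : cc = ∑' i, c i
  finite_support : ∀ n, ∃ K, ∀ k, K ≤ k → init n k = 0

/-- The total-weight normalization `σ(t) = (1+β(t))t + c̃ + cβ(t)`. -/
def sigf (β : ℝ → ℝ) (cc ctil t : ℝ) : ℝ := (1 + β t) * t + ctil + cc * β t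

/-- The truncated initial vector `c^d = (c_0, …, c_d, Σ_{i>d} c_i)`. -/
def cvec (d : ℕ) (c : ℕ → ℝ) : Fin (d+2) → ℝ :=
  fun i => if (i : ℕ) ≤ d then c i else ∑' k : ℕ, c (k + (d+1))

/-- View a vector in `ℝ^{d+2}` as an `ℕ`-indexed sequence (zero for large indices). -/
def toN {d : ℕ} (g : Fin (d+2) → ℝ) : ℕ → ℝ := fun i => if h : i < d+2 then g ⟨i, h⟩ else 0

/-- `ℕ`-indexed version of `c^d`. -/
def cvecN (d : ℕ) (c : ℕ → ℝ) : ℕ → ℝ := toN (cvec d c)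

/-- Extension of a path on `[0,1]` to all of `ℝ` (constant outside `[0,1]`). -/
def pext {d : ℕ} (φ : C(I01, Fin (d+2) → ℝ)) : ℝ → Fin (d+2) → ℝ :=
  fun t => φ (Set.projIcc 0 1 zero_le_one t)

/-- Coordinatewise derivative of a path. -/
def pderivC {d : ℕ} (φ : C(I01, Fin (d+2) → ℝ)) (t : ℝ) (i : Fin (d+2)) : ℝ :=
  deriv (fun s => pext φ s i) t

def xofN {d : ℕ} (φ : C(I01, Fin (d+2) → ℝ)) (t : ℝ) : ℕ → ℝ := toN (pext φ t)

def vofN {d : ℕ} (φ : C(I01, Fin (d+2) → ℝ)) (t : ℝ) : ℕ → ℝ := toN (fun i => pderivC φ t i)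

/-! ## The rate function integrand, with the conventions `0·log 0 = 0/0 = 0`, `1/0 = ∞` -/

/-- `a log(a/b)` as an extended real, with the conventions `0 log 0 = 0·(0/0) = 0` and
`a log(a/0) = ∞` for `a ≠ 0`. -/
def entTerm (a b : ℝ) : EReal :=
  if a = 0 then (0 : EReal) else if b ≤ 0 then (⊤ : EReal)
  else ((a * Real.log (a / b) : ℝ) : EReal)

/-- `1 - [v]_i`, the numerator attached to the increment `f_i`. -/
def numA (v : ℕ → ℝ) (i : ℕ) : ℝ := 1 - ∑ l ∈ Finset.range (i+1), v l

/-- `1 - Σ_{i=0}^d (1-[v]_i)`, the numerator attached to the increment `f_{d+1}`. -/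
def numALast (v : ℕ → ℝ) (d : ℕ) : ℝ := 1 - ∑ i ∈ Finset.range (d+1), numA v i

/-- The natural increment probabilities `u_i`, `0 ≤ i ≤ d`. -/
def denB (p β : ℝ → ℝ) (cc ctil : ℝ) (t : ℝ) (x : ℕ → ℝ) (i : ℕ) : ℝ :=
  if i = 0 then p t + (1 - p t) * (β t * x 0 / sigf β cc ctil t)
  else (1 - p t) * (((i : ℝ) + β t) * x i / sigf β cc ctil t)

/-- The natural increment probability `u_{d+1}`. -/
def denBLast (p β : ℝ → ℝ) (cc ctil : ℝ) (t : ℝ) (x : ℕ → ℝ) (d : ℕ) : ℝ :=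
  (1 - p t) * (1 - (∑ i ∈ Finset.range (d+1), ((i : ℝ) + β t) * x i) / sigf β cc ctil t)

/-- The relative-entropy integrand `L_d(t, x, ẋ)` of the rate function `I_d`. -/
def LdE (p β : ℝ → ℝ) (cc ctil : ℝ) (d : ℕ) (t : ℝ) (x v : ℕ → ℝ) : EReal :=
  (∑ i ∈ Finset.range (d+1), entTerm (numA v i) (denB p β cc ctil t x i))
    + entTerm (numALast v d) (denBLast p β cc ctil t x d)

/-- The set `Γ_d` of admissible paths. -/
def Gamma (d : ℕ) (c : ℕ → ℝ) : Set (C(I01, Fin (d+2) → ℝ)) :=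
  {φ | (∀ i, φ pt0 i = cvec d c i)
    ∧ (∀ (t : I01) (i : Fin (d+2)), 0 ≤ φ t i)
    ∧ (∀ i : Fin (d+2), LipschitzWith 1 (fun t : ℝ => pext φ t i))
    ∧ (∀ᵐ t ∂(volume.restrict (Set.Icc (0:ℝ) 1)),
        (∀ i ≤ d, 0 ≤ ∑ l ∈ Finset.range (i+1), vofN φ t l
            ∧ ∑ l ∈ Finset.range (i+1), vofN φ t l ≤ 1)
        ∧ (∑ i ∈ Finset.range (d+2), vofN φ t i = 1)
        ∧ (∑ i ∈ Finset.range (d+2), (i : ℝ) * vofN φ t i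
            = ∑ i ∈ Finset.range (d+1), numA (vofN φ t) i)
        ∧ ∑ i ∈ Finset.range (d+1), numA (vofN φ t) i ≤ 1)}

/-- Extended reals to `[0,∞]`, sending `⊤` to `⊤` and negatives to `0`. -/
def erealToENNReal (x : EReal) : ℝ≥0∞ := if x = ⊤ then ⊤ else ENNReal.ofReal x.toReal

/-- The finite-dimensional rate function `I_d`. -/
def Irate (p β : ℝ → ℝ) (c : ℕ → ℝ) (cc ctil : ℝ) (d : ℕ)
    (φ : C(I01, Fin (d+2) → ℝ)) : ℝ≥0∞ :=
  if φ ∈ Gamma d c then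
    ∫⁻ t in Set.Icc (0:ℝ) 1, erealToENNReal (LdE p β cc ctil d t (xofN φ t) (vofN φ t))
  else ⊤

/-- The large deviation principle with rate `n` and good rate function `I`:
compact level sets, upper bound over closed sets, lower bound over open sets. -/
def IsLDP {Ω : Type*} [MeasurableSpace Ω] {Y : Type*} [TopologicalSpace Y]
    (μ : Measure Ω) (Xn : ℕ → Ω → Y) (I : Y → ℝ≥0∞) : Prop :=
  (∀ M : ℝ≥0∞, M ≠ ⊤ → IsCompact {x | I x ≤ M})
  ∧ (∀ F : Set Y, IsClosed F →
      Filter.limsup (fun n : ℕ => ((Real.log ((μ ((Xn n) ⁻¹' F)).toReal) / n : ℝ) : EReal))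
          Filter.atTop ≤ -((⨅ x ∈ F, I x : ℝ≥0∞) : EReal))
  ∧ (∀ G : Set Y, IsOpen G →
      -((⨅ x ∈ G, I x : ℝ≥0∞) : EReal)
        ≤ Filter.liminf (fun n : ℕ => ((Real.log ((μ ((Xn n) ⁻¹' G)).toReal) / n : ℝ) : EReal))
            Filter.atTop)

/-- Convexity of an `[0,∞]`-valued rate function. -/
def ConvexRate {Y : Type*} [AddCommMonoid Y] [Module ℝ Y] (I : Y → ℝ≥0∞) : Prop :=
  ∀ x y : Y, ∀ a b : ℝ, 0 ≤ a → 0 ≤ b → a + b = 1 →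
    I (a • x + b • y) ≤ ENNReal.ofReal a * I x + ENNReal.ofReal b * I y

/-- The `L¹` norm on `ℝ^{d+2}`. -/
def l1norm {d : ℕ} (v : Fin (d+2) → ℝ) : ℝ := ∑ i, |v i|

/-! ## The time-dependent preferential attachment urn process -/

/-- Effect of the increment `f_i` on an urn configuration `z` (`z k` = number of urns
with exactly `k` balls): for `i = 0` a ball enters an urn of size `0` (or the new urn);
for `i ≥ 1` a new empty urn is created and an urn of size `i` becomes one of size `i+1`. -/
def applyF (i : ℕ) (z : ℕ → ℕ) : ℕ → ℕ :=
  if i = 0 then Function.update z 1 (z 1 + 1)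
  else fun k => if k = 0 then z 0 + 1 else if k = i then z i - 1
    else if k = i + 1 then z (i+1) + 1 else z k

/-- Total weight `Σ_k (k + β) z_k` of a configuration. -/
def urnWeight (βv : ℝ) (z : ℕ → ℕ) : ℝ := ∑' k : ℕ, ((k : ℝ) + βv) * (z k : ℝ)

/-- One-step transition probability of the urn scheme from `z` to `z'`. -/
def stepProb (pv βv : ℝ) (z z' : ℕ → ℕ) : ℝ :=
  ∑' i : ℕ,
    if z' = applyF i z then
      (if i = 0 then pv + (1 - pv) * (βv * (z 0 : ℝ) / urnWeight βv z)
       else (1 - pv) * (((i : ℝ) + βv) * (z i : ℝ) / urnWeight βv z))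
    else 0

/-- `Z n j ω k` is the number of urns with `k` balls at step `j` in the `n`-th row; the law
of each row is that of the time-dependent preferential attachment urn Markov chain. -/
def UrnLaw {Ω : Type*} [MeasurableSpace Ω] (μ : Measure Ω) (p β : ℝ → ℝ)
    (init : ℕ → ℕ → ℕ) (Z : ℕ → ℕ → Ω → ℕ → ℕ) : Prop :=
  (∀ n ω, Z n 0 ω = init n) ∧
  ∀ n : ℕ, 1 ≤ n → ∀ traj : ℕ → ℕ → ℕ, traj 0 = init n →
    μ {ω | ∀ j ≤ n, Z n j ω = traj j}
      = ENNReal.ofReal (∏ j ∈ Finset.range n,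
          stepProb (p ((j : ℝ) / n)) (β ((j : ℝ) / n)) (traj j) (traj (j+1)))

/-- Truncated degree vector `(Z_0, …, Z_d, Z̄_{d+1})` of a configuration. -/
def Ztrunc (d : ℕ) (z : ℕ → ℕ) : Fin (d+2) → ℝ :=
  fun i => if (i : ℕ) ≤ d then (z i : ℝ) else ∑' k : ℕ, (z (k + (d+1)) : ℝ)

/-- `X n` is the path `X^{n,d}`, the linear interpolation of `(1/n) Z^{n,d}(⌊nt⌋)`. -/
def InterpD {Ω : Type*} (d : ℕ) (Z : ℕ → ℕ → Ω → ℕ → ℕ)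
    (X : ℕ → Ω → C(I01, Fin (d+2) → ℝ)) : Prop :=
  ∀ n : ℕ, 1 ≤ n → ∀ ω (t : I01) (i : Fin (d+2)),
    X n ω t i
      = (1 - ((n : ℝ) * (t : ℝ) - (⌊(n : ℝ) * (t : ℝ)⌋₊ : ℝ)))
          * Ztrunc d (Z n ⌊(n : ℝ) * (t : ℝ)⌋₊ ω) i / n
        + ((n : ℝ) * (t : ℝ) - (⌊(n : ℝ) * (t : ℝ)⌋₊ : ℝ))
          * Ztrunc d (Z n (⌊(n : ℝ) * (t : ℝ)⌋₊ + 1) ω) i / n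

/-- `X n` is the path `X^{n,∞}`, the linear interpolation of `(1/n) Z^{n,∞}(⌊nt⌋)`. -/
def InterpInf {Ω : Type*} (Z : ℕ → ℕ → Ω → ℕ → ℕ)
    (X : ℕ → Ω → ∀ _ : ℕ, C(I01, ℝ)) : Prop :=
  ∀ n : ℕ, 1 ≤ n → ∀ ω (i : ℕ) (t : I01),
    X n ω i t
      = (1 - ((n : ℝ) * (t : ℝ) - (⌊(n : ℝ) * (t : ℝ)⌋₊ : ℝ)))
          * (Z n ⌊(n : ℝ) * (t : ℝ)⌋₊ ω i : ℝ) / n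
        + ((n : ℝ) * (t : ℝ) - (⌊(n : ℝ) * (t : ℝ)⌋₊ : ℝ))
          * (Z n (⌊(n : ℝ) * (t : ℝ)⌋₊ + 1) ω i : ℝ) / n

/-! ## The infinite-dimensional rate function -/

def extOne (f : C(I01, ℝ)) : ℝ → ℝ := fun t => f (Set.projIcc 0 1 zero_le_one t)

def xofInf (ξ : ∀ _ : ℕ, C(I01, ℝ)) (t : ℝ) : ℕ → ℝ := fun i => extOne (ξ i) t

def vofInf (ξ : ∀ _ : ℕ, C(I01, ℝ)) (t : ℝ) : ℕ → ℝ := fun i => deriv (extOne (ξ i)) t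

/-- The set `Γ^∞` of admissible infinite-dimensional paths. -/
def GammaInf (c : ℕ → ℝ) : Set (∀ _ : ℕ, C(I01, ℝ)) :=
  {ξ | (∀ i, ξ i pt0 = c i)
    ∧ (∀ i (t : I01), 0 ≤ ξ i t)
    ∧ (∀ i, LipschitzWith 1 (extOne (ξ i)))
    ∧ (∀ t : I01, Summable (fun i => ξ i t))
    ∧ (∀ᵐ t ∂(volume.restrict (Set.Icc (0:ℝ) 1)),
        (∀ i : ℕ, 0 ≤ ∑ l ∈ Finset.range (i+1), vofInf ξ t l
            ∧ ∑ l ∈ Finset.range (i+1), vofInf ξ t l ≤ 1)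
        ∧ HasDerivAt (fun s : ℝ => ∑' i, extOne (ξ i) s) 1 t
        ∧ Summable (fun i => numA (vofInf ξ t) i)
        ∧ ∑' i, numA (vofInf ξ t) i ≤ 1)}

/-- The infinite-dimensional rate function `I^∞`. -/
def IrateInf (p β : ℝ → ℝ) (c : ℕ → ℝ) (cc ctil : ℝ) (ξ : ∀ _ : ℕ, C(I01, ℝ)) : ℝ≥0∞ :=
  if ξ ∈ GammaInf c then
    ∫⁻ t in Set.Icc (0:ℝ) 1,
      ⨆ d : ℕ, erealToENNReal (LdE p β cc ctil d t (xofInf ξ t) (vofInf ξ t))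
  else ⊤

/-! ## Projective limit setting -/

/-- The truncation `p_{ij} : ℝ^{j+2} → ℝ^{i+2}`, `(x_0,…,x_{j+1}) ↦ (x_0,…,x_i, Σ_{l>i} x_l)`. -/
def truncMap (i j : ℕ) (_hij : i ≤ j) : (Fin (j+2) → ℝ) → (Fin (i+2) → ℝ) :=
  fun x k =>
    if (k : ℕ) ≤ i then x (Fin.castLE (by omega) k)
    else ∑ l : Fin (j+2), if i + 1 ≤ (l : ℕ) then x l else 0

lemma truncMap_continuous (i j : ℕ) (hij : i ≤ j) : Continuous (truncMap i j hij) := by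
  apply continuous_pi
  intro k
  show Continuous fun x : Fin (j+2) → ℝ => truncMap i j hij x k
  by_cases h : (k : ℕ) ≤ i
  · simp only [truncMap, if_pos h]
    exact continuous_apply _
  · simp only [truncMap, if_neg h]
    apply continuous_finset_sum
    intro l _
    by_cases hl : i + 1 ≤ (l : ℕ)
    · simp only [if_pos hl]; exact continuous_apply _
    · simp only [if_neg hl]; exact continuous_const

/-- The projection `p_{ij} : 𝒴_j → 𝒴_i` on path spaces. -/
def projMapC (i j : ℕ) (hij : i ≤ j) (φ : C(I01, Fin (j+2) → ℝ)) : C(I01, Fin (i+2) → ℝ) :=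
  ⟨fun t => truncMap i j hij (φ t), (truncMap_continuous i j hij).comp φ.continuous⟩

/-- The projective limit `lim← 𝒴_j ⊆ Π_j 𝒴_j`. -/
def ProjLim : Set (∀ j : ℕ, C(I01, Fin (j+2) → ℝ)) :=
  {x | ∀ (i j : ℕ) (hij : i ≤ j), projMapC i j hij (x j) = x i}

/-- `Γ* ⊆ lim← 𝒴_j`: compatible families with all coordinates admissible. -/
def GammaStar (c : ℕ → ℝ) : Set (∀ j : ℕ, C(I01, Fin (j+2) → ℝ)) :=
  {x | x ∈ ProjLim ∧ ∀ d, x d ∈ Gamma d c}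

/-- The projective-limit rate function `J^∞(φ) = sup_d I_d(p_d φ)`. -/
def Jinf (p β : ℝ → ℝ) (c : ℕ → ℝ) (cc ctil : ℝ)
    (x : ∀ j : ℕ, C(I01, Fin (j+2) → ℝ)) : ℝ≥0∞ :=
  if x ∈ ProjLim then ⨆ d : ℕ, Irate p β c cc ctil d (x d) else ⊤

/-! ## Carathéodory solutions of the LLN ODE systems -/

/-- A Carathéodory solution on `[0,T]` of `ẋ = F(t,x)`, `x(0) = x₀`, in coordinates `≤ N`
(equivalently, a solution of the associated integral equation). -/
def IsCaraSol (F : ℝ → (ℕ → ℝ) → ℕ → ℝ) (x0 : ℕ → ℝ) (N : ℕ) (T : ℝ) (f : ℝ → ℕ → ℝ) : Prop :=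
  ∀ i ≤ N, IntervalIntegrable (fun s => F s (f s) i) volume 0 T ∧
    ∀ t ∈ Set.Icc (0:ℝ) T, f t i = x0 i + ∫ s in (0:ℝ)..t, F s (f s) i

/-- A Carathéodory solution on `[0,∞)`. -/
def IsCaraSolIci (F : ℝ → (ℕ → ℝ) → ℕ → ℝ) (x0 : ℕ → ℝ) (N : ℕ) (f : ℝ → ℕ → ℝ) : Prop :=
  ∀ i ≤ N, (∀ T > (0:ℝ), IntervalIntegrable (fun s => F s (f s) i) volume 0 T) ∧
    ∀ t ∈ Set.Ici (0:ℝ), f t i = x0 i + ∫ s in (0:ℝ)..t, F s (f s) i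

/-- The vector field of the LLN ODE system, coordinates `i ≥ 0`. -/
def LLNfield0 (p β : ℝ → ℝ) (cc ctil : ℝ) (t : ℝ) (x : ℕ → ℝ) : ℕ → ℝ := fun i =>
  if i = 0 then 1 - p t - (1 - p t) * (β t * x 0 / sigf β cc ctil t)
  else (if i = 1 then p t else 0)
    + (1 - p t) * ((((i : ℝ) - 1) + β t) * x (i-1) / sigf β cc ctil t)
    - (1 - p t) * (((i : ℝ) + β t) * x i / sigf β cc ctil t)

/-- The vector field of the `d`-dimensional LLN ODE system (with the last coordinate
`φ̇_{d+1} = 1 - Σ_{i≤d} φ̇_i`). -/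
def LLNfield (p β : ℝ → ℝ) (cc ctil : ℝ) (d : ℕ) (t : ℝ) (x : ℕ → ℝ) : ℕ → ℝ := fun i =>
  if i ≤ d then LLNfield0 p β cc ctil t x i
  else if i = d + 1 then 1 - ∑ l ∈ Finset.range (d+1), LLNfield0 p β cc ctil t x l
  else 0

/-- Truncation of an infinite family `ζ` to the `d`-dimensional path
`(ζ_0, …, ζ_d, ζ̄_{d+1})` with `ζ̄_{d+1}(t) = t + c - Σ_{i≤d} ζ_i(t)`. -/
def truncSol (d : ℕ) (cc : ℝ) (ζ : ℕ → ℝ → ℝ) : ℝ → ℕ → ℝ := fun t i =>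
  if i ≤ d then ζ i t
  else if i = d + 1 then t + cc - ∑ l ∈ Finset.range (d+1), ζ l t
  else 0

/-- The integrating factor `M_i(s,t) = exp[-∫_s^t (1-p(u))(i+β(u))/σ(u) du]`. -/
def Mfac (p β : ℝ → ℝ) (cc ctil : ℝ) (i : ℕ) (s t : ℝ) : ℝ :=
  Real.exp (-(∫ u in s..t, (1 - p u) * (((i : ℝ) + β u) / sigf β cc ctil u)))

/-- The explicit solution formulas of the LLN ODE system. -/
def zetaExpl (p β : ℝ → ℝ) (cc ctil : ℝ) (c : ℕ → ℝ) : ℕ → ℝ → ℝ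
  | 0 => fun t => c 0 * Mfac p β cc ctil 0 0 t
      + ∫ s in (0:ℝ)..t, (1 - p s) * Mfac p β cc ctil 0 s t
  | (i+1) => fun t => c (i+1) * Mfac p β cc ctil (i+1) 0 t
      + ∫ s in (0:ℝ)..t,
          ((if i = 0 then p s else 0)
            + (1 - p s) * (((i : ℝ) + β s) * zetaExpl p β cc ctil c i s / sigf β cc ctil s))
          * Mfac p β cc ctil (i+1) s t

/-- The scalar field `G(t,x)` of the comparison ODE. -/
def Gfield (p β : ℝ → ℝ) (cc ctil : ℝ) (t x : ℝ) : ℝ :=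
  p t + (1 - p t) * ((x + β t * (t + cc)) / sigf β cc ctil t)

/-- A scalar Carathéodory solution on `[0,∞)`. -/
def IsCaraScalIci (G : ℝ → ℝ → ℝ) (x0 : ℝ) (f : ℝ → ℝ) : Prop :=
  (∀ T > (0:ℝ), IntervalIntegrable (fun s => G s (f s)) volume 0 T) ∧
    ∀ t ∈ Set.Ici (0:ℝ), f t = x0 + ∫ s in (0:ℝ)..t, G s (f s)

/-- The vector field of the comparison system `O(o₁,o₂,o₃,o₄,o₅)` (coordinates `0 ≤ i ≤ d`). -/
def OField (o1 o2 o3 o4 o5 : ℝ) (d : ℕ) (t : ℝ) (x : ℕ → ℝ) : ℕ → ℝ := fun i =>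
  if i = 0 then 1 - o1 - (1 - o2) * (o3 / (1 + o4)) * (x 0 / (t + o5))
  else if i ≤ d then
    (if i = 1 then o1 else 0)
      + (1 - o2) / (1 + o4) * (((((i : ℝ) - 1) + o3) * x (i-1) - ((i : ℝ) + o3) * x i) / (t + o5))
  else 0

/-! ## Constructions for the lower bound -/

/-- Convex combination `φ_θ = (1-θ)φ* + θℓ`. -/
def phiMix {d : ℕ} (θ : ℝ) (φstar ℓC : C(I01, Fin (d+2) → ℝ)) : C(I01, Fin (d+2) → ℝ) :=
  (1 - θ) • φstar + θ • ℓC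

/-- Block time-average `γ_κ` of the derivative of `φ` on the `κ`-block partition of `[0,1]`
(with `γ_κ(1) = γ_κ(1 - 1/κ)`). -/
def blockAvg {d : ℕ} (φ : C(I01, Fin (d+2) → ℝ)) (κ : ℕ) (t : ℝ) (i : Fin (d+2)) : ℝ :=
  (κ : ℝ) * ∫ s in (((min ⌊t * κ⌋₊ (κ-1) : ℕ) : ℝ)/κ)..((((min ⌊t * κ⌋₊ (κ-1) : ℕ) : ℝ) + 1)/κ),
      pderivC φ s i

/-- The regularized path `ψ_κ(t) = c^d + ∫_0^t γ_κ(s) ds`. -/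
def psiKappa {d : ℕ} (φ : C(I01, Fin (d+2) → ℝ)) (κ : ℕ) (c : ℕ → ℝ) (t : ℝ)
    (i : Fin (d+2)) : ℝ :=
  cvec d c i + ∫ s in (0:ℝ)..t, blockAvg φ κ s i

/-- The increment vectors `f_0, …, f_{d+1}` of the truncated chain. -/
def fvec (d : ℕ) (i : ℕ) : Fin (d+2) → ℝ := fun k =>
  if i = 0 then (if (k : ℕ) = 1 then 1 else 0)
  else if i ≤ d then
    (if (k : ℕ) = 0 then 1 else 0) + (if (k : ℕ) = i then -1 else 0)
      + (if (k : ℕ) = i + 1 then 1 else 0)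
  else if (k : ℕ) = 0 then 1 else 0

/-- The switching times `t_i = δ - Σ_{l=i}^d (δ + [c^d]_l - [ψ_κ(δ)]_l)`, `t_{d+1} = δ`. -/
def tSwitch {d : ℕ} (ψδ : Fin (d+2) → ℝ) (c : ℕ → ℝ) (δ : ℝ) : ℕ → ℝ := fun i =>
  if i ≤ d then
    δ - ∑ l ∈ Finset.Icc i d,
      (δ + (∑ m ∈ Finset.range (l+1), cvecN d c m) - (∑ m ∈ Finset.range (l+1), toN ψδ m))
  else δ

/-- The modified step derivative `γ*`: increment `f_{d+1}` on `[0,t_0)`, `f_i` on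
`[t_i, t_{i+1})` before time `δ`, and `γ_κ` from `δ` on. -/
def gammaStar {d : ℕ} (g : ℝ → Fin (d+2) → ℝ) (ts : ℕ → ℝ) (δ : ℝ) (t : ℝ) :
    Fin (d+2) → ℝ :=
  if δ ≤ t then g t
  else if t < ts 0 then fvec d (d+1)
  else fvec d (sSup {i : ℕ | i ≤ d ∧ ts i ≤ t})

def tSwitchFull {d : ℕ} (φstar ℓC : C(I01, Fin (d+2) → ℝ)) (θ : ℝ) (κ : ℕ) (c : ℕ → ℝ)
    (δ : ℝ) : ℕ → ℝ :=
  tSwitch (fun i => psiKappa (phiMix θ φstar ℓC) κ c δ i) c δ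

/-- `ψ̇* = γ*` built from the data `φ*, ℓ, θ, κ, δ`. -/
def gammaStarFull {d : ℕ} (φstar ℓC : C(I01, Fin (d+2) → ℝ)) (θ : ℝ) (κ : ℕ) (c : ℕ → ℝ)
    (δ : ℝ) : ℝ → Fin (d+2) → ℝ :=
  gammaStar (fun t => blockAvg (phiMix θ φstar ℓC) κ t) (tSwitchFull φstar ℓC θ κ c δ) δ

/-- The modified path `ψ*(t) = c^d + ∫_0^t γ*(s) ds`. -/
def psiStarFull {d : ℕ} (φstar ℓC : C(I01, Fin (d+2) → ℝ)) (θ : ℝ) (κ : ℕ) (c : ℕ → ℝ)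
    (δ : ℝ) (t : ℝ) : Fin (d+2) → ℝ :=
  fun i => cvec d c i + ∫ s in (0:ℝ)..t, gammaStarFull φstar ℓC θ κ c δ s i

/-! ## The controlled chain of the lower bound -/

/-- Mean of the control at step `l`: `ψ̇*(l/n)` if `l ≤ ⌊δn⌋`, or if `l ≥ ⌈δn⌉` and the
state is above the threshold; otherwise the mean `ρm l` of the natural increment law. -/
def ctrlMean {d : ℕ} (γs : ℝ → Fin (d+2) → ℝ) (ρm : ℕ → Fin (d+2) → ℝ)
    (Xb : ℕ → Fin (d+2) → ℝ) (c : ℕ → ℝ) (e : Fin (d+2) → ℝ) (θ δ : ℝ) (n l : ℕ) :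
    Fin (d+2) → ℝ :=
  if l ≤ ⌊δ * (n : ℝ)⌋₊ ∨ (⌈δ * (n : ℝ)⌉₊ ≤ l ∧ ∀ i, (θ/4) * (e i * δ + cvec d c i) ≤ Xb l i)
  then γs ((l : ℝ) / n) else ρm l

/-- The martingale `M^n(j) = X̄^n(j) - (1/n) Σ_{l<j} Ē(Ȳ^n(l) | X̄^n(l)) - c^d`. -/
def ctrlMart {d : ℕ} (γs : ℝ → Fin (d+2) → ℝ) (ρm : ℕ → Fin (d+2) → ℝ)
    (Xb : ℕ → Fin (d+2) → ℝ) (c : ℕ → ℝ) (e : Fin (d+2) → ℝ) (θ δ : ℝ) (n j : ℕ) :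
    Fin (d+2) → ℝ :=
  fun i => Xb j i - (1/(n:ℝ)) * ∑ l ∈ Finset.range j, ctrlMean γs ρm Xb c e θ δ n l i
    - cvec d c i

/-- The stopping time `τ_n = n ∧ min{⌈δn⌉ ≤ l ≤ n : X̄_i^n(l) < (θ/4)(e_i δ + c_i), some i}`. -/
def stopTau {d : ℕ} (Xb : ℕ → Fin (d+2) → ℝ) (c : ℕ → ℝ) (e : Fin (d+2) → ℝ)
    (θ δ : ℝ) (n : ℕ) : ℕ :=
  sInf ({n} ∪ {l : ℕ | ⌈δ * (n : ℝ)⌉₊ ≤ l ∧ l ≤ n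
    ∧ ∃ i, Xb l i < (θ/4) * (e i * δ + cvec d c i)})



/-! ### Auxiliary lemmas for `Irate_linear_finite` -/

lemma entTerm_eq_coe (a b : ℝ) (hb : 0 < b) :
    entTerm a b = ((a * Real.log (a / b) : ℝ) : EReal) := by
  unfold entTerm
  split_ifs with h1 h2
  · simp [h1]
  · linarith
  · rfl

lemma ereal_coe_sum {α : Type*} (s : Finset α) (f : α → ℝ) :
    ((∑ i ∈ s, f i : ℝ) : EReal) = ∑ i ∈ s, ((f i : ℝ) : EReal) :=
  map_sum (⟨⟨Real.toEReal, EReal.coe_zero⟩, EReal.coe_add⟩ : ℝ →+ EReal) f s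

lemma erealToENNReal_coe (r : ℝ) : erealToENNReal (r : EReal) = ENNReal.ofReal r := by
  unfold erealToENNReal
  rw [if_neg (EReal.coe_ne_top r), EReal.toReal_coe]

lemma neg_log_le_rpow {t : ℝ} (ht : 0 < t) : -Real.log t ≤ 2 * t ^ (-(1:ℝ)/2) := by
  have h1 : Real.log (t ^ (-(1:ℝ)/2)) ≤ t ^ (-(1:ℝ)/2) - 1 :=
    Real.log_le_sub_one_of_pos (Real.rpow_pos_of_pos ht _)
  rw [Real.log_rpow ht] at h1
  linarith

lemma key_bound (a b κ t : ℝ) (ha : 0 ≤ a) (ha1 : a ≤ 1) (hκ : 0 < κ)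
    (ht : 0 < t) (hb : κ * t ≤ b) :
    a * Real.log (a / b) ≤ |Real.log κ| + 2 * t ^ (-(1:ℝ)/2) := by
  have htp : 0 < t ^ (-(1:ℝ)/2) := Real.rpow_pos_of_pos ht _
  have hb0 : 0 < b := lt_of_lt_of_le (mul_pos hκ ht) hb
  have hRHS : 0 ≤ |Real.log κ| + 2 * t ^ (-(1:ℝ)/2) := by positivity
  rcases eq_or_lt_of_le ha with h0 | ha0
  · simpa [← h0] using hRHS
  have hlog : Real.log (a / b) ≤ -Real.log κ - Real.log t := by
    have h2 : a / b ≤ 1 / (κ * t) := by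
      rw [div_le_div_iff₀ hb0 (mul_pos hκ ht)]
      nlinarith
    calc Real.log (a / b) ≤ Real.log (1 / (κ * t)) :=
          Real.log_le_log (by positivity) h2
      _ = -Real.log κ - Real.log t := by
          rw [one_div, Real.log_inv, Real.log_mul hκ.ne' ht.ne']; ring
  have hlt : -Real.log t ≤ 2 * t ^ (-(1:ℝ)/2) := neg_log_le_rpow ht
  rcases le_or_gt (Real.log (a / b)) 0 with h | h
  · nlinarith
  · calc a * Real.log (a / b) ≤ 1 * Real.log (a / b) := by nlinarith
      _ = Real.log (a / b) := one_mul _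
      _ ≤ |Real.log κ| + 2 * t ^ (-(1:ℝ)/2) := by
          have := abs_nonneg (Real.log κ)
          have := neg_abs_le (Real.log κ)
          linarith

lemma sum_one_sub_partial (v : ℕ → ℝ) (n : ℕ) :
    ∑ i ∈ Finset.range n, (1 - ∑ l ∈ Finset.range (i+1), v l)
      = (n : ℝ) - ∑ l ∈ Finset.range n, ((n:ℝ) - (l:ℝ)) * v l := by
  induction n with
  | zero => simp
  | succ n ih =>
    have h : ∑ l ∈ Finset.range (n+1), (((n:ℝ)+1) - (l:ℝ)) * v l
        = (∑ l ∈ Finset.range n, ((n:ℝ) - (l:ℝ)) * v l) + ∑ l ∈ Finset.range (n+1), v l := by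
      rw [Finset.sum_range_succ, Finset.sum_range_succ (f := v),
        Finset.sum_congr rfl (fun l _ => by ring :
          ∀ l ∈ Finset.range n, ((n:ℝ)+1 - (l:ℝ)) * v l = (((n:ℝ) - l)*v l + v l)),
        Finset.sum_add_distrib]
      ring
    rw [Finset.sum_range_succ, ih]
    push_cast
    linarith [h]

set_option maxHeartbeats 2000000 in
/-- **Lemma.**  For the linear path `ℓ(t) = e t + c^d` with `e_i > 0`, `Σ e_i = 1` and
`Σ i e_i ≤ 1`, one has `I_d(ℓ) < ∞`. -/
theorem Irate_linear_finite
    (p β : ℝ → ℝ) (p0 β0 β1 : ℝ) (hND : ND p β p0 β0 β1)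
    (c : ℕ → ℝ) (cc ctil : ℝ) (hLIM : LIMc c cc ctil) (d : ℕ)
    (e : Fin (d+2) → ℝ) (he : ∀ i, 0 < e i) (hes : ∑ i, e i = 1)
    (hie : ∑ i : Fin (d+2), ((i : ℕ) : ℝ) * e i ≤ 1)
    (ℓC : C(I01, Fin (d+2) → ℝ))
    (hℓ : ∀ (t : I01) (i : Fin (d+2)), ℓC t i = e i * (t : ℝ) + cvec d c i) :
    Irate p β c cc ctil d ℓC < ⊤ := by
  classical
  set E : ℕ → ℝ := toN e with hE
  have hEval : ∀ (l : ℕ) (h : l < d+2), E l = e ⟨l, h⟩ := by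
    intro l h; simp [hE, toN, h]
  have hEcoe : ∀ i : Fin (d+2), E (i:ℕ) = e i := by
    intro i; rw [hEval _ i.isLt]
  have hEnn : ∀ l, 0 ≤ E l := by
    intro l
    by_cases h : l < d+2
    · rw [hEval l h]; exact (he _).le
    · simp [hE, toN, h]
  have hEpos : ∀ (l : ℕ), l < d+2 → 0 < E l := by
    intro l h; rw [hEval l h]; exact he _
  have hEsum : ∑ i ∈ Finset.range (d+2), E i = 1 := by
    rw [← Fin.sum_univ_eq_sum_range E (d+2), Finset.sum_congr rfl fun i _ => hEcoe i]
    exact hes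
  have hiE : ∑ i ∈ Finset.range (d+2), (i:ℝ) * E i ≤ 1 := by
    rw [← Fin.sum_univ_eq_sum_range (fun i => (i:ℝ) * E i) (d+2)]
    calc ∑ i : Fin (d+2), ((i:ℕ):ℝ) * E (i:ℕ)
        = ∑ i : Fin (d+2), ((i:ℕ):ℝ) * e i :=
          Finset.sum_congr rfl fun i _ => by rw [hEcoe i]
      _ ≤ 1 := hie
  have hiEnn : 0 ≤ ∑ i ∈ Finset.range (d+2), (i:ℝ) * E i :=
    Finset.sum_nonneg fun i _ => mul_nonneg (Nat.cast_nonneg i) (hEnn i)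
  -- facts about c
  have hcnn : ∀ i, 0 ≤ c i := hLIM.nonneg
  have hccnn : 0 ≤ cc := hLIM.cc_eq ▸ tsum_nonneg hcnn
  have hctilnn : 0 ≤ ctil := hLIM.ctil_eq ▸
    tsum_nonneg fun i => mul_nonneg (Nat.cast_nonneg i) (hcnn i)
  have hBc : ∑ i ∈ Finset.range (d+1), c i ≤ cc :=
    hLIM.cc_eq ▸ Summable.sum_le_tsum _ (fun i _ => hcnn i) hLIM.summable
  have hAc : ∑ i ∈ Finset.range (d+1), (i:ℝ) * c i ≤ ctil :=
    hLIM.ctil_eq ▸ Summable.sum_le_tsum _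
      (fun i _ => mul_nonneg (Nat.cast_nonneg i) (hcnn i)) hLIM.mul_summable
  have hcvec : ∀ i : Fin (d+2), 0 ≤ cvec d c i := by
    intro i; unfold cvec; split
    · exact hcnn _
    · exact tsum_nonneg fun k => hcnn _
  -- facts about p, β
  have hmem01 : (0:ℝ) ∈ Set.Icc (0:ℝ) 1 := ⟨le_refl 0, zero_le_one⟩
  have hβ0 : 0 < β0 := hND.β0_pos
  have hp01 : p0 < 1 := hND.p0_lt_one
  have hβ01 : β0 ≤ β1 := (hND.β_lb 0 hmem01).trans (hND.β_ub 0 hmem01)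
  set S : ℝ := 1 + β1 + ctil + cc * β1 with hS
  have hSpos : 0 < S := by
    have : 0 ≤ cc * β1 := mul_nonneg hccnn (by linarith)
    rw [hS]; linarith
  -- partial sums of E
  have hpartnn : ∀ k, 0 ≤ ∑ l ∈ Finset.range k, E l :=
    fun k => Finset.sum_nonneg fun l _ => hEnn l
  have hpartle : ∀ k, k ≤ d+2 → ∑ l ∈ Finset.range k, E l ≤ 1 := by
    intro k hk
    rw [← hEsum]
    exact Finset.sum_le_sum_of_subset_of_nonneg (Finset.range_subset_range.mpr hk)
      fun l _ _ => hEnn l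
  -- key combinatorial identity
  have hNident : ∑ i ∈ Finset.range (d+1), numA E i
      = ∑ i ∈ Finset.range (d+2), (i:ℝ) * E i := by
    have h1 := sum_one_sub_partial E (d+1)
    have h2 : ∑ l ∈ Finset.range (d+1), (((d+1:ℕ):ℝ) - (l:ℝ)) * E l
        = ((d:ℝ)+1) * (∑ l ∈ Finset.range (d+1), E l)
          - ∑ l ∈ Finset.range (d+1), (l:ℝ) * E l := by
      rw [Finset.mul_sum, ← Finset.sum_sub_distrib]
      refine Finset.sum_congr rfl fun l _ => ?_
      push_cast; ring
    have h3 : ∑ i ∈ Finset.range (d+2), (i:ℝ) * E i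
        = ∑ i ∈ Finset.range (d+1), (i:ℝ) * E i + ((d:ℝ)+1) * E (d+1) := by
      rw [Finset.sum_range_succ]; push_cast; ring
    have h4 : ∑ l ∈ Finset.range (d+1), E l + E (d+1) = 1 := by
      rw [← Finset.sum_range_succ]; exact hEsum
    simp only [numA]
    rw [h1, h2, h3]
    push_cast
    linear_combination (-((d:ℝ)+1)) * h4
  -- derivative of the extended linear path
  have hderiv : ∀ t ∈ Set.Ioo (0:ℝ) 1, ∀ i : Fin (d+2), pderivC ℓC t i = e i := by
    intro t ht i
    have hev : (fun s => pext ℓC s i) =ᶠ[𝓝 t] (fun s => e i * s + cvec d c i) := by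
      filter_upwards [Ioo_mem_nhds ht.1 ht.2] with s hs
      have hs' : s ∈ Set.Icc (0:ℝ) 1 := Set.Ioo_subset_Icc_self hs
      show ℓC (Set.projIcc 0 1 _ s) i = _
      rw [Set.projIcc_of_mem _ hs']
      exact hℓ ⟨s, hs'⟩ i
    rw [pderivC, hev.deriv_eq]
    simpa using (((hasDerivAt_id t).const_mul (e i)).add_const (cvec d c i)).deriv
  have hvE : ∀ t ∈ Set.Ioo (0:ℝ) 1, vofN ℓC t = E := by
    intro t ht; funext l
    by_cases h : l < d+2
    · show toN (fun i => pderivC ℓC t i) l = E l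
      rw [hEval l h]
      simp only [toN, dif_pos h]
      exact hderiv t ht ⟨l, h⟩
    · show toN (fun i => pderivC ℓC t i) l = toN e l
      simp only [toN, dif_neg h]
  have hxval : ∀ t ∈ Set.Icc (0:ℝ) 1, ∀ l, l ≤ d → xofN ℓC t l = E l * t + c l := by
    intro t ht l hl
    have hld : l < d+2 := by omega
    show toN (pext ℓC t) l = E l * t + c l
    simp only [toN, dif_pos hld, pext]
    rw [Set.projIcc_of_mem _ ht, hℓ ⟨t, ht⟩ ⟨l, hld⟩, hEval l hld]
    congr 1
    simp only [cvec]
    rw [if_pos (show ((⟨l, hld⟩ : Fin (d+2)) : ℕ) ≤ d from hl)]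
  -- a.e. restriction to the open interval
  have hae : ∀ᵐ t ∂(volume.restrict (Set.Icc (0:ℝ) 1)), t ∈ Set.Ioo (0:ℝ) 1 := by
    refine ae_iff.mpr ?_
    show (volume.restrict (Set.Icc (0:ℝ) 1)) (Set.Ioo (0:ℝ) 1)ᶜ = 0
    rw [Measure.restrict_apply (measurableSet_Ioo (a := (0:ℝ)) (b := 1)).compl]
    have hsub : (Set.Ioo (0:ℝ) 1)ᶜ ∩ Set.Icc 0 1 ⊆ ({0, 1} : Set ℝ) := by
      rintro x ⟨hx1, hx2⟩
      simp only [Set.mem_compl_iff, Set.mem_Ioo, not_and_or, not_lt] at hx1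
      rcases hx1 with h | h
      · exact Or.inl (le_antisymm h hx2.1)
      · exact Or.inr (le_antisymm hx2.2 h)
    have h01 : volume ({0, 1} : Set ℝ) = 0 := by
      rw [Set.insert_eq]
      exact measure_union_null (measure_singleton 0) (measure_singleton 1)
    exact measure_mono_null hsub h01
  -- membership in Γ_d
  have hmem : ℓC ∈ Gamma d c := by
    refine ⟨?_, ?_, ?_, ?_⟩
    · intro i
      rw [hℓ pt0 i]
      show e i * (0:ℝ) + cvec d c i = cvec d c i
      ring
    · intro t i
      rw [hℓ t i]
      exact add_nonneg (mul_nonneg (he i).le t.2.1) (hcvec i)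
    · intro i
      apply LipschitzWith.of_dist_le_mul
      intro a b
      have hp := (LipschitzWith.projIcc (zero_le_one (α := ℝ))).dist_le_mul a b
      rw [Subtype.dist_eq, Real.dist_eq, Real.dist_eq, NNReal.coe_one, one_mul] at hp
      have hei : e i ≤ 1 := by
        calc e i ≤ ∑ j, e j := Finset.single_le_sum (fun j _ => (he j).le) (Finset.mem_univ i)
          _ = 1 := hes
      simp only [pext]
      rw [hℓ _ i, hℓ _ i, NNReal.coe_one, one_mul, Real.dist_eq, Real.dist_eq]
      have heq : e i * ((Set.projIcc 0 1 zero_le_one a : I01) : ℝ) + cvec d c i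
          - (e i * ((Set.projIcc 0 1 zero_le_one b : I01) : ℝ) + cvec d c i)
          = e i * (((Set.projIcc 0 1 zero_le_one a : I01) : ℝ)
            - ((Set.projIcc 0 1 zero_le_one b : I01) : ℝ)) := by ring
      rw [heq, abs_mul, abs_of_nonneg (he i).le]
      nlinarith [abs_nonneg (a - b), abs_nonneg (((Set.projIcc 0 1 zero_le_one a : I01) : ℝ)
        - ((Set.projIcc 0 1 zero_le_one b : I01) : ℝ))]
    · filter_upwards [hae] with t ht
      rw [hvE t ht]
      refine ⟨fun i hi => ⟨hpartnn _, hpartle _ (by omega)⟩, hEsum, hNident.symm, ?_⟩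
      rw [hNident]; exact hiE
  -- the constants
  set κ : ℕ → ℝ := fun i => (1 - p0) * (β0 * E i) / S with hκ
  have hκpos : ∀ i, i < d+2 → 0 < κ i := by
    intro i h
    have h1 : 0 < (1 - p0) := by linarith
    have h2 := hEpos i h
    simp only [hκ]
    exact div_pos (mul_pos h1 (mul_pos hβ0 h2)) hSpos
  set M : ℝ := ∑ i ∈ Finset.range (d+2), |Real.log (κ i)| with hM
  set g : ℝ → ℝ := fun t => M + 2 * ((d:ℝ)+2) * t ^ (-(1:ℝ)/2) with hg
  -- pointwise bound on the integrand
  have hbound : ∀ t ∈ Set.Ioo (0:ℝ) 1,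
      erealToENNReal (LdE p β cc ctil d t (xofN ℓC t) (vofN ℓC t))
        ≤ ENNReal.ofReal (g t) := by
    intro t ht
    have htI : t ∈ Set.Icc (0:ℝ) 1 := Set.Ioo_subset_Icc_self ht
    have ht0 : 0 < t := ht.1
    have ht1 : t ≤ 1 := ht.2.le
    have hpt0 : 0 ≤ p t := hND.p_nonneg t htI
    have hptp0 : p t ≤ p0 := hND.p_le t htI
    have hβl : β0 ≤ β t := hND.β_lb t htI
    have hβu : β t ≤ β1 := hND.β_ub t htI
    have hβtpos : 0 < β t := lt_of_lt_of_le hβ0 hβl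
    have hσpos : 0 < sigf β cc ctil t := by
      unfold sigf
      nlinarith [mul_nonneg hccnn hβtpos.le]
    have hσS : sigf β cc ctil t ≤ S := by
      unfold sigf; rw [hS]
      nlinarith [mul_le_of_le_one_right (show (0:ℝ) ≤ 1 + β t by linarith) ht1,
        mul_le_mul_of_nonneg_left hβu hccnn]
    rw [hvE t ht]
    -- lower bounds on the denominators
    have hden : ∀ i ∈ Finset.range (d+1), κ i * t ≤ denB p β cc ctil t (xofN ℓC t) i := by
      intro i hi
      have hid : i ≤ d := by have := Finset.mem_range.mp hi; omega
      have hxi := hxval t htI i hid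
      have hEit : 0 ≤ E i * t := mul_nonneg (hEnn i) ht0.le
      have hfrac0 : 0 ≤ β0 * (E i * t) / S :=
        div_nonneg (mul_nonneg hβ0.le hEit) hSpos.le
      by_cases h0 : i = 0
      · subst h0
        have h1 : β0 * (E 0 * t) ≤ β t * xofN ℓC t 0 := by
          rw [hxi]
          exact mul_le_mul hβl (le_add_of_nonneg_right (hcnn 0)) hEit hβtpos.le
        have h2 : β0 * (E 0 * t) / S ≤ β t * xofN ℓC t 0 / sigf β cc ctil t :=
          div_le_div₀ (le_trans (mul_nonneg hβ0.le hEit) h1) h1 hσpos hσS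
        have h3 : (1 - p0) * (β0 * (E 0 * t) / S)
            ≤ (1 - p t) * (β t * xofN ℓC t 0 / sigf β cc ctil t) :=
          mul_le_mul (by linarith) h2 hfrac0 (by linarith)
        simp only [denB, eq_self_iff_true, if_true]
        have hq : κ 0 * t = (1 - p0) * (β0 * (E 0 * t) / S) := by
          simp only [hκ]; ring
        rw [hq]; linarith
      · have hic : (0:ℝ) ≤ (i:ℝ) := Nat.cast_nonneg i
        have h1 : β0 * (E i * t) ≤ ((i:ℝ) + β t) * xofN ℓC t i := by
          rw [hxi]
          exact mul_le_mul (by linarith) (le_add_of_nonneg_right (hcnn i)) hEit (by linarith)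
        have h2 : β0 * (E i * t) / S ≤ ((i:ℝ) + β t) * xofN ℓC t i / sigf β cc ctil t :=
          div_le_div₀ (le_trans (mul_nonneg hβ0.le hEit) h1) h1 hσpos hσS
        have h3 : (1 - p0) * (β0 * (E i * t) / S)
            ≤ (1 - p t) * (((i:ℝ) + β t) * xofN ℓC t i / sigf β cc ctil t) :=
          mul_le_mul (by linarith) h2 hfrac0 (by linarith)
        simp only [denB, if_neg h0]
        have hq : κ i * t = (1 - p0) * (β0 * (E i * t) / S) := by
          simp only [hκ]; ring
        rw [hq]; exact h3
    -- lower bound on the last denominator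
    have hEd1 : 0 < E (d+1) := hEpos (d+1) (by omega)
    have hW : ∑ i ∈ Finset.range (d+1), ((i:ℝ) + β t) * xofN ℓC t i
        = t * (∑ i ∈ Finset.range (d+1), (i:ℝ) * E i)
          + β t * t * (∑ i ∈ Finset.range (d+1), E i)
          + (∑ i ∈ Finset.range (d+1), (i:ℝ) * c i)
          + β t * (∑ i ∈ Finset.range (d+1), c i) := by
      rw [Finset.mul_sum, Finset.mul_sum, Finset.mul_sum,
        ← Finset.sum_add_distrib, ← Finset.sum_add_distrib, ← Finset.sum_add_distrib]
      refine Finset.sum_congr rfl fun i hi => ?_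
      rw [hxval t htI i (by have := Finset.mem_range.mp hi; omega)]
      ring
    have hA1 : ∑ i ∈ Finset.range (d+1), (i:ℝ) * E i + ((d:ℝ)+1) * E (d+1) ≤ 1 := by
      have h := hiE
      rw [Finset.sum_range_succ] at h
      push_cast at h
      linarith
    have hAle : ∑ i ∈ Finset.range (d+1), (i:ℝ) * E i ≤ 1 := by
      nlinarith [mul_nonneg (show (0:ℝ) ≤ (d:ℝ)+1 by positivity) hEd1.le]
    have hB : ∑ l ∈ Finset.range (d+1), E l + E (d+1) = 1 := by
      rw [← Finset.sum_range_succ]; exact hEsum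
    have hσW : β0 * E (d+1) * t
        ≤ sigf β cc ctil t - ∑ i ∈ Finset.range (d+1), ((i:ℝ) + β t) * xofN ℓC t i := by
      rw [hW]
      unfold sigf
      have hkey : t * (β0 * E (d+1))
          ≤ β t * t * (1 - ∑ l ∈ Finset.range (d+1), E l) := by
        have h1B : (1:ℝ) - ∑ l ∈ Finset.range (d+1), E l = E (d+1) := by linarith
        rw [h1B]
        nlinarith [mul_nonneg (mul_nonneg (sub_nonneg.mpr hβl) ht0.le) hEd1.le]
      have h_t1A : 0 ≤ t * (1 - ∑ i ∈ Finset.range (d+1), (i:ℝ) * E i) :=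
        mul_nonneg ht0.le (by linarith)
      have h_ctil : 0 ≤ ctil - ∑ i ∈ Finset.range (d+1), (i:ℝ) * c i := by linarith
      have h_ccβ : 0 ≤ β t * (cc - ∑ i ∈ Finset.range (d+1), c i) :=
        mul_nonneg hβtpos.le (by linarith)
      nlinarith [hkey, h_t1A, h_ctil, h_ccβ]
    have hdenlast : κ (d+1) * t ≤ denBLast p β cc ctil t (xofN ℓC t) d := by
      have hWnn : 0 ≤ sigf β cc ctil t
          - ∑ i ∈ Finset.range (d+1), ((i:ℝ) + β t) * xofN ℓC t i :=
        le_trans (by positivity) hσW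
      have h1 : β0 * E (d+1) * t / S
          ≤ (sigf β cc ctil t - ∑ i ∈ Finset.range (d+1), ((i:ℝ) + β t) * xofN ℓC t i)
            / sigf β cc ctil t :=
        div_le_div₀ hWnn hσW hσpos hσS
      rw [sub_div, div_self hσpos.ne'] at h1
      have hfrac0 : 0 ≤ β0 * E (d+1) * t / S := by positivity
      have h3 : (1 - p0) * (β0 * E (d+1) * t / S)
          ≤ (1 - p t) * (1 - (∑ i ∈ Finset.range (d+1), ((i:ℝ) + β t) * xofN ℓC t i)
              / sigf β cc ctil t) :=
        mul_le_mul (by linarith) h1 hfrac0 (by linarith)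
      unfold denBLast
      have hq : κ (d+1) * t = (1 - p0) * (β0 * E (d+1) * t / S) := by
        simp only [hκ]; ring
      rw [hq]; exact h3
    -- positivity of denominators
    have hdenpos : ∀ i ∈ Finset.range (d+1), 0 < denB p β cc ctil t (xofN ℓC t) i := by
      intro i hi
      have hi2 : i < d+2 := by have := Finset.mem_range.mp hi; omega
      exact lt_of_lt_of_le (mul_pos (hκpos i hi2) ht0) (hden i hi)
    have hdenlastpos : 0 < denBLast p β cc ctil t (xofN ℓC t) d :=
      lt_of_lt_of_le (mul_pos (hκpos (d+1) (by omega)) ht0) hdenlast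
    -- numerator bounds
    have hnumnn : ∀ i, i ≤ d → 0 ≤ numA E i := by
      intro i hi
      have := hpartle (i+1) (by omega)
      simp only [numA]; linarith
    have hnumle : ∀ i, numA E i ≤ 1 := by
      intro i
      have := hpartnn (i+1)
      simp only [numA]; linarith
    have hlast_eq : numALast E d = 1 - ∑ i ∈ Finset.range (d+2), (i:ℝ) * E i := by
      unfold numALast; rw [hNident]
    have hlastnn : 0 ≤ numALast E d := by rw [hlast_eq]; linarith
    have hlastle : numALast E d ≤ 1 := by rw [hlast_eq]; linarith
    -- rewrite the integrand as a real number
    have hcoe : LdE p β cc ctil d t (xofN ℓC t) E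
        = (((∑ i ∈ Finset.range (d+1),
              numA E i * Real.log (numA E i / denB p β cc ctil t (xofN ℓC t) i))
            + numALast E d
              * Real.log (numALast E d / denBLast p β cc ctil t (xofN ℓC t) d) : ℝ) : EReal) := by
      unfold LdE
      rw [Finset.sum_congr rfl (fun i hi => entTerm_eq_coe _ _ (hdenpos i hi)),
        ← ereal_coe_sum, entTerm_eq_coe _ _ hdenlastpos, ← EReal.coe_add]
    rw [hcoe, erealToENNReal_coe]
    apply ENNReal.ofReal_le_ofReal
    have hterm : ∀ i ∈ Finset.range (d+1),
        numA E i * Real.log (numA E i / denB p β cc ctil t (xofN ℓC t) i)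
          ≤ |Real.log (κ i)| + 2 * t ^ (-(1:ℝ)/2) := by
      intro i hi
      have hi2 : i < d+2 := by have := Finset.mem_range.mp hi; omega
      have hid : i ≤ d := by have := Finset.mem_range.mp hi; omega
      exact key_bound _ _ _ _ (hnumnn i hid) (hnumle i) (hκpos i hi2) ht0 (hden i hi)
    have hterml : numALast E d
        * Real.log (numALast E d / denBLast p β cc ctil t (xofN ℓC t) d)
          ≤ |Real.log (κ (d+1))| + 2 * t ^ (-(1:ℝ)/2) :=
      key_bound _ _ _ _ hlastnn hlastle (hκpos (d+1) (by omega)) ht0 hdenlast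
    have hsum : ∑ i ∈ Finset.range (d+1),
        numA E i * Real.log (numA E i / denB p β cc ctil t (xofN ℓC t) i)
          ≤ ∑ i ∈ Finset.range (d+1), (|Real.log (κ i)| + 2 * t ^ (-(1:ℝ)/2)) :=
      Finset.sum_le_sum hterm
    rw [Finset.sum_add_distrib, Finset.sum_const, Finset.card_range, nsmul_eq_mul] at hsum
    have hMsplit : M = ∑ i ∈ Finset.range (d+1), |Real.log (κ i)| + |Real.log (κ (d+1))| := by
      rw [hM, Finset.sum_range_succ]
    simp only [hg]
    rw [hMsplit]
    push_cast at hsum ⊢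
    linarith
  -- conclude
  rw [Irate, if_pos hmem]
  calc ∫⁻ t in Set.Icc (0:ℝ) 1,
        erealToENNReal (LdE p β cc ctil d t (xofN ℓC t) (vofN ℓC t))
      ≤ ∫⁻ t in Set.Icc (0:ℝ) 1, ENNReal.ofReal (g t) :=
        lintegral_mono_ae (hae.mono fun t ht => hbound t ht)
    _ = ∫⁻ t in Set.Ioc (0:ℝ) 1, ENNReal.ofReal (g t) := by
        rw [← Measure.restrict_congr_set Ioc_ae_eq_Icc]
    _ < ⊤ := by
        have h1 : IntervalIntegrable (fun x:ℝ => x ^ (-(1:ℝ)/2)) volume 0 1 :=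
          intervalIntegral.intervalIntegrable_rpow' (by norm_num)
        rw [intervalIntegrable_iff_integrableOn_Ioc_of_le zero_le_one] at h1
        have h2 : IntegrableOn (fun _ : ℝ => M) (Set.Ioc (0:ℝ) 1) volume :=
          (integrableOn_const_iff).mpr (Or.inr measure_Ioc_lt_top)
        have hint : IntegrableOn g (Set.Ioc (0:ℝ) 1) volume := by
          rw [hg]
          exact h2.add (h1.const_mul (2*((d:ℝ)+2)))
        exact hint.lintegral_lt_top


end
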